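/- Let X = X₁ × X₂ and X̃ = X̃₁ × X̃₂ with X₁,X̃₁ ⊆ ℝ^{n₁} open, X₂,X̃₂ ⊆ ℝ^{n₂} open and convex, and let φ = (φ₁,φ₂) ∈ C¹(X̃,X) be a diffeomorphism with D_{x̃₂}φ₁ = 0 everywhere. Then: (i) there exists a diffeomorphism φ₁₁ ∈ C¹(X̃₁,X₁) such that φ₁₁(x̃₁) = φ₁(x̃₁,x̃₂) and Dφ₁₁(x̃₁) = D_{x̃₁}φ₁(x̃₁,x̃₂) for all (x̃₁,x̃₂) ∈ X̃; and (ii) if H ∈ C¹(X,ℝ) satisfies ∇_{x₂}H = 0 everywhere, H₁ ∈ C¹(X₁,ℝ) is its specified function, D̄H₁ is a discrete gradient for H₁, and D̄φ₁₁ is a discrete Jacobian for φ₁₁, then H̃ = H∘φ satisfies ∇_{x̃₂}H̃ = 0 everywhere, its specified function equals H̃₁ = H₁∘φ₁₁, and the map D̄H̃₁(x̃₁,x̃₁') = D̄φ₁₁(x̃₁,x̃₁')ᵀ D̄H₁(φ₁₁(x̃₁),φ₁₁(x̃₁')) is a discrete gradient for H̃₁. -/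

import Mathlib

open Matrix Set

noncomputable def grad {n : ℕ} (f : (Fin n → ℝ) → ℝ) (x : Fin n → ℝ) : Fin n → ℝ :=
  fun i => fderiv ℝ f x (Pi.single i 1)

noncomputable def grad1 {n1 n2 : ℕ} (f : ((Fin n1 → ℝ) × (Fin n2 → ℝ)) → ℝ)
    (x : (Fin n1 → ℝ) × (Fin n2 → ℝ)) : Fin n1 → ℝ :=
  fun i => fderiv ℝ f x (Pi.single i 1, 0)

noncomputable def grad2 {n1 n2 : ℕ} (f : ((Fin n1 → ℝ) × (Fin n2 → ℝ)) → ℝ)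
    (x : (Fin n1 → ℝ) × (Fin n2 → ℝ)) : Fin n2 → ℝ :=
  fun j => fderiv ℝ f x (0, Pi.single j 1)

noncomputable def jac {n m : ℕ} (f : (Fin n → ℝ) → (Fin m → ℝ)) (x : Fin n → ℝ) :
    Matrix (Fin m) (Fin n) ℝ :=
  Matrix.of fun i j => fderiv ℝ f x (Pi.single j 1) i

def IsDiscreteGradient {n : ℕ} (X : Set (Fin n → ℝ)) (f : (Fin n → ℝ) → ℝ)
    (Df : (Fin n → ℝ) → (Fin n → ℝ) → (Fin n → ℝ)) : Prop :=
  ContinuousOn (fun p : (Fin n → ℝ) × (Fin n → ℝ) => Df p.1 p.2) (X ×ˢ X) ∧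
  (∀ x ∈ X, ∀ x' ∈ X, Df x x' ⬝ᵥ (x' - x) = f x' - f x) ∧
  (∀ x ∈ X, Df x x = grad f x)

def IsDiscreteJacobian {n m : ℕ} (X : Set (Fin n → ℝ)) (F : (Fin n → ℝ) → (Fin m → ℝ))
    (DF : (Fin n → ℝ) → (Fin n → ℝ) → Matrix (Fin m) (Fin n) ℝ) : Prop :=
  ContinuousOn (fun p : (Fin n → ℝ) × (Fin n → ℝ) => DF p.1 p.2) (X ×ˢ X) ∧
  (∀ x ∈ X, ∀ x' ∈ X, (DF x x').mulVec (x' - x) = F x' - F x) ∧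
  (∀ x ∈ X, DF x x = jac F x)

/- ---------------- auxiliary lemmas ---------------- -/

lemma vec_expand {n : ℕ} (v : Fin n → ℝ) :
    v = ∑ i, v i • (Pi.single i 1 : Fin n → ℝ) := by
  funext j
  simp [Finset.sum_apply, Pi.single_apply]

lemma clm_expand {n : ℕ} {E : Type*} [NormedAddCommGroup E] [NormedSpace ℝ E]
    (L : (Fin n → ℝ) →L[ℝ] E) (v : Fin n → ℝ) :
    L v = ∑ i, v i • L (Pi.single i 1) := by
  conv_lhs => rw [vec_expand v]
  simp

lemma clm_expand2 {n1 n2 : ℕ} {E : Type*} [NormedAddCommGroup E] [NormedSpace ℝ E]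
    (L : ((Fin n1 → ℝ) × (Fin n2 → ℝ)) →L[ℝ] E) (u : Fin n1 → ℝ) (v : Fin n2 → ℝ) :
    L (u, v) = (∑ i, u i • L (Pi.single i 1, 0)) + ∑ j, v j • L (0, Pi.single j 1) := by
  have h : (u, v) = ((u, 0) : (Fin n1 → ℝ) × (Fin n2 → ℝ)) + (0, v) := by simp
  rw [h, map_add]
  congr 1
  · have := clm_expand (L.comp (ContinuousLinearMap.inl ℝ (Fin n1 → ℝ) (Fin n2 → ℝ))) u
    simpa using this
  · have := clm_expand (L.comp (ContinuousLinearMap.inr ℝ (Fin n1 → ℝ) (Fin n2 → ℝ))) v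
    simpa using this

lemma const_of_deriv_zero {k : ℕ} {E : Type*} [NormedAddCommGroup E] [NormedSpace ℝ E]
    {s : Set (Fin k → ℝ)} (hconv : Convex ℝ s)
    {f : (Fin k → ℝ) → E} (hf : ∀ x ∈ s, HasFDerivAt f (0 : (Fin k → ℝ) →L[ℝ] E) x)
    {x y : Fin k → ℝ} (hx : x ∈ s) (hy : y ∈ s) : f x = f y := by
  have := Convex.norm_image_sub_le_of_norm_hasFDerivWithin_le
    (f' := fun _ => (0 : (Fin k → ℝ) →L[ℝ] E)) (C := 0)
    (fun z hz => (hf z hz).hasFDerivWithinAt) (fun z _ => by simp) hconv hx hy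
  simpa [sub_eq_zero, eq_comm] using this

section helpers
variable {X Y E : Type*} [NormedAddCommGroup X] [NormedSpace ℝ X]
  [NormedAddCommGroup Y] [NormedSpace ℝ Y] [NormedAddCommGroup E] [NormedSpace ℝ E]

lemma hasFDerivAt_comp_left {f : X × Y → E} {a : X} {c : Y}
    (h : DifferentiableAt ℝ f (a, c)) :
    HasFDerivAt (fun x => f (x, c))
      ((fderiv ℝ f (a, c)).comp (ContinuousLinearMap.inl ℝ X Y)) a := by
  have h1 : HasFDerivAt (fun x : X => (x, c)) ((ContinuousLinearMap.id ℝ X).prod 0) a :=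
    HasFDerivAt.prodMk (hasFDerivAt_id a) (hasFDerivAt_const c a)
  have h2 : ((ContinuousLinearMap.id ℝ X).prod 0) = ContinuousLinearMap.inl ℝ X Y := by
    ext v <;> simp
  rw [h2] at h1
  exact h.hasFDerivAt.comp a h1

lemma hasFDerivAt_comp_right {f : X × Y → E} {a : X} {c : Y}
    (h : DifferentiableAt ℝ f (a, c)) :
    HasFDerivAt (fun y => f (a, y))
      ((fderiv ℝ f (a, c)).comp (ContinuousLinearMap.inr ℝ X Y)) c := by
  have h1 : HasFDerivAt (fun y : Y => (a, y))
      (((0 : Y →L[ℝ] X)).prod (ContinuousLinearMap.id ℝ Y)) c :=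
    HasFDerivAt.prodMk (hasFDerivAt_const a c) (hasFDerivAt_id c)
  have h2 : ((0 : Y →L[ℝ] X)).prod (ContinuousLinearMap.id ℝ Y)
      = ContinuousLinearMap.inr ℝ X Y := by
    ext v <;> simp
  rw [h2] at h1
  exact h.hasFDerivAt.comp c h1

end helpers

/-- for a diffeomorphism `φ = (φ₁, φ₂)` with `D_{x̃₂}φ₁ = 0` there is a
reduced diffeomorphism `φ₁₁`, and the specified function of `H̃ = H ∘ φ` is
`H₁ ∘ φ₁₁`, with the chain rule producing a discrete gradient for it. -/
theorem specified_chain_rule {n1 n2 : ℕ}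
    (X1 : Set (Fin n1 → ℝ)) (X2 : Set (Fin n2 → ℝ))
    (Xt1 : Set (Fin n1 → ℝ)) (Xt2 : Set (Fin n2 → ℝ))
    (hX1 : IsOpen X1) (hX2 : IsOpen X2) (hX2conv : Convex ℝ X2)
    (hXt1 : IsOpen Xt1) (hXt2 : IsOpen Xt2) (hXt2conv : Convex ℝ Xt2)
    (hX2ne : X2.Nonempty) (hXt2ne : Xt2.Nonempty)
    -- φ is a C¹ diffeomorphism from X̃ = X̃1 × X̃2 onto X = X1 × X2
    (φ ψ : ((Fin n1 → ℝ) × (Fin n2 → ℝ)) → ((Fin n1 → ℝ) × (Fin n2 → ℝ)))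
    (hφ : ContDiffOn ℝ 1 φ (Xt1 ×ˢ Xt2)) (hφmap : Set.MapsTo φ (Xt1 ×ˢ Xt2) (X1 ×ˢ X2))
    (hψ : ContDiffOn ℝ 1 ψ (X1 ×ˢ X2)) (hψmap : Set.MapsTo ψ (X1 ×ˢ X2) (Xt1 ×ˢ Xt2))
    (hψφ : ∀ xt ∈ Xt1 ×ˢ Xt2, ψ (φ xt) = xt) (hφψ : ∀ x ∈ X1 ×ˢ X2, φ (ψ x) = x)
    -- D_{x̃₂}φ₁ = 0 on X̃
    (hDφ12 : ∀ xt ∈ Xt1 ×ˢ Xt2, ∀ (j : Fin n2),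
      (fderiv ℝ φ xt ((0 : Fin n1 → ℝ), Pi.single j 1)).1 = 0)
    -- H with vanishing second partial gradient and its specified function H₁
    (H : ((Fin n1 → ℝ) × (Fin n2 → ℝ)) → ℝ) (hH : ContDiffOn ℝ 1 H (X1 ×ˢ X2))
    (hHgrad2 : ∀ x ∈ X1 ×ˢ X2, grad2 H x = 0)
    (H1 : (Fin n1 → ℝ) → ℝ) (hH1 : ContDiffOn ℝ 1 H1 X1)
    (hH1val : ∀ x1 ∈ X1, ∀ x2 ∈ X2, H1 x1 = H (x1, x2))
    (hH1grad : ∀ x1 ∈ X1, ∀ x2 ∈ X2, grad H1 x1 = grad1 H (x1, x2))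
    -- a discrete gradient of H₁
    (DH1 : (Fin n1 → ℝ) → (Fin n1 → ℝ) → (Fin n1 → ℝ))
    (hDH1 : IsDiscreteGradient X1 H1 DH1) :
    ∃ φ11 ψ11 : (Fin n1 → ℝ) → (Fin n1 → ℝ),
      -- (i) φ₁₁ is a diffeomorphism from X̃₁ onto X₁ specified by φ₁
      ContDiffOn ℝ 1 φ11 Xt1 ∧ Set.MapsTo φ11 Xt1 X1 ∧
      ContDiffOn ℝ 1 ψ11 X1 ∧ Set.MapsTo ψ11 X1 Xt1 ∧
      (∀ xt1 ∈ Xt1, ψ11 (φ11 xt1) = xt1) ∧ (∀ x1 ∈ X1, φ11 (ψ11 x1) = x1) ∧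
      (∀ xt1 ∈ Xt1, ∀ xt2 ∈ Xt2,
        φ11 xt1 = (φ (xt1, xt2)).1 ∧
        jac φ11 xt1 = Matrix.of (fun (i : Fin n1) (j : Fin n1) =>
          (fderiv ℝ φ (xt1, xt2) (Pi.single j 1, (0 : Fin n2 → ℝ))).1 i)) ∧
      -- (ii) H̃ = H ∘ φ has vanishing second partial gradient, its specified function
      -- is H₁ ∘ φ₁₁, and the chain rule yields a discrete gradient for it
      ((∀ xt ∈ Xt1 ×ˢ Xt2, grad2 (H ∘ φ) xt = 0) ∧
       (∀ xt1 ∈ Xt1, ∀ xt2 ∈ Xt2,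
          (H1 ∘ φ11) xt1 = (H ∘ φ) (xt1, xt2) ∧
          grad (H1 ∘ φ11) xt1 = grad1 (H ∘ φ) (xt1, xt2)) ∧
       (∀ Dφ11 : (Fin n1 → ℝ) → (Fin n1 → ℝ) → Matrix (Fin n1) (Fin n1) ℝ,
          IsDiscreteJacobian Xt1 φ11 Dφ11 →
          IsDiscreteGradient Xt1 (H1 ∘ φ11)
            (fun a b => (Dφ11 a b)ᵀ.mulVec (DH1 (φ11 a) (φ11 b))))) := by
  obtain ⟨xt20, hxt20⟩ := hXt2ne
  obtain ⟨x20, hx20⟩ := hX2ne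
  have hXt : IsOpen (Xt1 ×ˢ Xt2) := hXt1.prod hXt2
  have hX : IsOpen (X1 ×ˢ X2) := hX1.prod hX2
  -- pointwise differentiability
  have hφd : ∀ p ∈ Xt1 ×ˢ Xt2, DifferentiableAt ℝ φ p := fun p hp =>
    ((hφ.differentiableOn one_ne_zero) p hp).differentiableAt (hXt.mem_nhds hp)
  have hψd : ∀ p ∈ X1 ×ˢ X2, DifferentiableAt ℝ ψ p := fun p hp =>
    ((hψ.differentiableOn one_ne_zero) p hp).differentiableAt (hX.mem_nhds hp)
  have hHd : ∀ p ∈ X1 ×ˢ X2, DifferentiableAt ℝ H p := fun p hp =>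
    ((hH.differentiableOn one_ne_zero) p hp).differentiableAt (hX.mem_nhds hp)
  have hH1d : ∀ x1 ∈ X1, DifferentiableAt ℝ H1 x1 := fun x1 hx1 =>
    ((hH1.differentiableOn one_ne_zero) x1 hx1).differentiableAt (hX1.mem_nhds hx1)
  -- φ-derivative kills second-block vectors in first component
  have hDφv : ∀ p ∈ Xt1 ×ˢ Xt2, ∀ v : Fin n2 → ℝ, (fderiv ℝ φ p (0, v)).1 = 0 := by
    intro p hp v
    have h := clm_expand2 ((ContinuousLinearMap.fst ℝ (Fin n1 → ℝ) (Fin n2 → ℝ)).comp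
      (fderiv ℝ φ p)) 0 v
    have hj : ∀ j, ((fderiv ℝ φ p) ((0 : Fin n1 → ℝ), Pi.single j 1)).1 = 0 := hDφ12 p hp
    simpa [hj] using h
  -- (φ _).1 is independent of the second argument
  have hφ1const : ∀ xt1 ∈ Xt1, ∀ xt2 ∈ Xt2, ∀ xt2' ∈ Xt2,
      (φ (xt1, xt2)).1 = (φ (xt1, xt2')).1 := by
    intro xt1 h1 xt2 h2 xt2' h2'
    refine const_of_deriv_zero hXt2conv (f := fun y => (φ (xt1, y)).1) ?_ h2 h2'
    intro y hy
    have hd := hφd (xt1, y) ⟨h1, hy⟩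
    have hs := hasFDerivAt_comp_right hd
    have hfst := (ContinuousLinearMap.fst ℝ (Fin n1 → ℝ) (Fin n2 → ℝ)).hasFDerivAt.comp y hs
    have hzero : (ContinuousLinearMap.fst ℝ (Fin n1 → ℝ) (Fin n2 → ℝ)).comp
        ((fderiv ℝ φ (xt1, y)).comp (ContinuousLinearMap.inr ℝ _ _))
        = (0 : (Fin n2 → ℝ) →L[ℝ] (Fin n1 → ℝ)) := by
      ext v j
      simpa using congrFun (hDφv (xt1, y) ⟨h1, hy⟩ v) j
    rw [hzero] at hfst
    exact hfst
  -- derivative inverses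
  have hLM : ∀ x ∈ X1 ×ˢ X2,
      (fderiv ℝ φ (ψ x)).comp (fderiv ℝ ψ x) = ContinuousLinearMap.id ℝ _ := by
    intro x hx
    have hxt := hψmap hx
    have hchain : HasFDerivAt (φ ∘ ψ) ((fderiv ℝ φ (ψ x)).comp (fderiv ℝ ψ x)) x :=
      (hφd (ψ x) hxt).hasFDerivAt.comp x (hψd x hx).hasFDerivAt
    have heq : (id : _ → _) =ᶠ[nhds x] (φ ∘ ψ) :=
      Filter.eventuallyEq_of_mem (hX.mem_nhds hx) (fun z hz => (hφψ z hz).symm)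
    have := hchain.congr_of_eventuallyEq heq
    exact this.unique (hasFDerivAt_id x)
  have hML : ∀ x ∈ X1 ×ˢ X2,
      (fderiv ℝ ψ x).comp (fderiv ℝ φ (ψ x)) = ContinuousLinearMap.id ℝ _ := by
    intro x hx
    have hxt := hψmap hx
    have hφψx : φ (ψ x) = x := hφψ x hx
    have hchain : HasFDerivAt (ψ ∘ φ) ((fderiv ℝ ψ x).comp (fderiv ℝ φ (ψ x))) (ψ x) := by
      have h1 : HasFDerivAt ψ (fderiv ℝ ψ x) (φ (ψ x)) := by
        rw [hφψx]; exact (hψd x hx).hasFDerivAt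
      exact h1.comp (ψ x) (hφd (ψ x) hxt).hasFDerivAt
    have heq : (id : _ → _) =ᶠ[nhds (ψ x)] (ψ ∘ φ) :=
      Filter.eventuallyEq_of_mem (hXt.mem_nhds hxt) (fun z hz => (hψφ z hz).symm)
    have := hchain.congr_of_eventuallyEq heq
    exact this.unique (hasFDerivAt_id (ψ x))
  -- ψ-derivative also kills second-block vectors in first component
  have hDψv : ∀ x ∈ X1 ×ˢ X2, ∀ v : Fin n2 → ℝ, (fderiv ℝ ψ x (0, v)).1 = 0 := by
    intro x hx v
    have hxt := hψmap hx
    set L := fderiv ℝ φ (ψ x) with hLdef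
    set M := fderiv ℝ ψ x with hMdef
    have hLMx : ∀ u, L (M u) = u := fun u => by
      have := congrArg (fun T : ((Fin n1 → ℝ) × (Fin n2 → ℝ)) →L[ℝ] _ => T u) (hLM x hx)
      simpa using this
    have hLv : ∀ w : Fin n2 → ℝ, (L (0, w)).1 = 0 := fun w => hDφv (ψ x) hxt w
    have hLsplit : ∀ u : (Fin n1 → ℝ) × (Fin n2 → ℝ), (L u).1 = (L (u.1, 0)).1 := by
      intro u
      have : u = ((u.1, 0) : (Fin n1 → ℝ) × (Fin n2 → ℝ)) + (0, u.2) := by simp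
      rw [this, map_add, Prod.fst_add, hLv u.2, add_zero]
      simp
    let A : (Fin n1 → ℝ) →ₗ[ℝ] (Fin n1 → ℝ) :=
      { toFun := fun a => (L (a, 0)).1
        map_add' := fun a b => by
          show (L (a + b, 0)).1 = (L (a, 0)).1 + (L (b, 0)).1
          have h : ((a + b, 0) : (Fin n1 → ℝ) × (Fin n2 → ℝ)) = (a, 0) + (b, 0) := by simp
          rw [h, map_add, Prod.fst_add]
        map_smul' := fun c a => by
          show (L (c • a, 0)).1 = c • (L (a, 0)).1
          have h : ((c • a, 0) : (Fin n1 → ℝ) × (Fin n2 → ℝ)) = c • (a, 0) := by simp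
          rw [h, _root_.map_smul, Prod.smul_fst] }
    have hAsurj : Function.Surjective A := by
      intro y
      refine ⟨(M (y, 0)).1, ?_⟩
      have h1 : L (M (y, 0)) = (y, 0) := hLMx (y, 0)
      have h2 : A (M (y, 0)).1 = (L (M (y, 0))).1 := (hLsplit (M (y, 0))).symm
      rw [h2, h1]
    have hAinj : Function.Injective A := LinearMap.injective_iff_surjective.2 hAsurj
    have hkey : A (M (0, v)).1 = A 0 := by
      have h1 : L (M (0, v)) = (0, v) := hLMx (0, v)
      have h2 : A (M (0, v)).1 = (L (M (0, v))).1 := (hLsplit (M (0, v))).symm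
      rw [h2, h1]
      simp [A]
      rw [Prod.mk_zero_zero, map_zero]; simp
    exact hAinj hkey
  -- (ψ _).1 is independent of the second argument
  have hψ1const : ∀ x1 ∈ X1, ∀ x2 ∈ X2, ∀ x2' ∈ X2,
      (ψ (x1, x2)).1 = (ψ (x1, x2')).1 := by
    intro x1 h1 x2 h2 x2' h2'
    refine const_of_deriv_zero hX2conv (f := fun y => (ψ (x1, y)).1) ?_ h2 h2'
    intro y hy
    have hd := hψd (x1, y) ⟨h1, hy⟩
    have hs := hasFDerivAt_comp_right hd
    have hfst := (ContinuousLinearMap.fst ℝ (Fin n1 → ℝ) (Fin n2 → ℝ)).hasFDerivAt.comp y hs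
    have hzero : (ContinuousLinearMap.fst ℝ (Fin n1 → ℝ) (Fin n2 → ℝ)).comp
        ((fderiv ℝ ψ (x1, y)).comp (ContinuousLinearMap.inr ℝ _ _))
        = (0 : (Fin n2 → ℝ) →L[ℝ] (Fin n1 → ℝ)) := by
      ext v j
      simpa using congrFun (hDψv (x1, y) ⟨h1, hy⟩ v) j
    rw [hzero] at hfst
    exact hfst
  -- the reduced maps
  set φ11 : (Fin n1 → ℝ) → (Fin n1 → ℝ) := fun a => (φ (a, xt20)).1 with hφ11def
  set ψ11 : (Fin n1 → ℝ) → (Fin n1 → ℝ) := fun b => (ψ (b, x20)).1 with hψ11def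
  have hφ11val : ∀ xt1 ∈ Xt1, ∀ xt2 ∈ Xt2, φ11 xt1 = (φ (xt1, xt2)).1 :=
    fun xt1 h1 xt2 h2 => hφ1const xt1 h1 xt20 hxt20 xt2 h2
  have hψ11val : ∀ x1 ∈ X1, ∀ x2 ∈ X2, ψ11 x1 = (ψ (x1, x2)).1 :=
    fun x1 h1 x2 h2 => hψ1const x1 h1 x20 hx20 x2 h2
  have hφ11map : Set.MapsTo φ11 Xt1 X1 := fun a ha => (hφmap ⟨ha, hxt20⟩).1
  have hψ11map : Set.MapsTo ψ11 X1 Xt1 := fun b hb => (hψmap ⟨hb, hx20⟩).1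
  have hφ11cd : ContDiffOn ℝ 1 φ11 Xt1 := by
    have hg : ContDiffOn ℝ 1 (fun a : Fin n1 → ℝ => ((a, xt20) :
        (Fin n1 → ℝ) × (Fin n2 → ℝ))) Xt1 := (contDiff_id.prodMk contDiff_const).contDiffOn
    exact (contDiff_fst.comp_contDiffOn (hφ.comp hg (fun a ha => ⟨ha, hxt20⟩)))
  have hψ11cd : ContDiffOn ℝ 1 ψ11 X1 := by
    have hg : ContDiffOn ℝ 1 (fun b : Fin n1 → ℝ => ((b, x20) :
        (Fin n1 → ℝ) × (Fin n2 → ℝ))) X1 := (contDiff_id.prodMk contDiff_const).contDiffOn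
    exact (contDiff_fst.comp_contDiffOn (hψ.comp hg (fun b hb => ⟨hb, hx20⟩)))
  have hψφ11 : ∀ xt1 ∈ Xt1, ψ11 (φ11 xt1) = xt1 := by
    intro xt1 h1
    have hp : φ (xt1, xt20) ∈ X1 ×ˢ X2 := hφmap ⟨h1, hxt20⟩
    have h2 : ψ11 (φ11 xt1) = (ψ ((φ (xt1, xt20)).1, (φ (xt1, xt20)).2)).1 :=
      hψ11val _ hp.1 _ hp.2
    rw [h2]
    have : ((φ (xt1, xt20)).1, (φ (xt1, xt20)).2) = φ (xt1, xt20) := rfl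
    rw [this, hψφ (xt1, xt20) ⟨h1, hxt20⟩]
  have hφψ11 : ∀ x1 ∈ X1, φ11 (ψ11 x1) = x1 := by
    intro x1 h1
    have hp : ψ (x1, x20) ∈ Xt1 ×ˢ Xt2 := hψmap ⟨h1, hx20⟩
    have h2 : φ11 (ψ11 x1) = (φ ((ψ (x1, x20)).1, (ψ (x1, x20)).2)).1 :=
      hφ11val _ hp.1 _ hp.2
    rw [h2]
    have : ((ψ (x1, x20)).1, (ψ (x1, x20)).2) = ψ (x1, x20) := rfl
    rw [this, hφψ (x1, x20) ⟨h1, hx20⟩]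
  -- key derivative formula for φ11
  have hφ11deriv : ∀ xt1 ∈ Xt1, ∀ xt2 ∈ Xt2,
      HasFDerivAt φ11 ((ContinuousLinearMap.fst ℝ (Fin n1 → ℝ) (Fin n2 → ℝ)).comp
        ((fderiv ℝ φ (xt1, xt2)).comp (ContinuousLinearMap.inl ℝ _ _))) xt1 := by
    intro xt1 h1 xt2 h2
    have hd := hφd (xt1, xt2) ⟨h1, h2⟩
    have hs := hasFDerivAt_comp_left hd
    have hfst := (ContinuousLinearMap.fst ℝ (Fin n1 → ℝ) (Fin n2 → ℝ)).hasFDerivAt.comp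
      xt1 hs
    have heq : φ11 =ᶠ[nhds xt1] (fun a => (φ (a, xt2)).1) :=
      Filter.eventuallyEq_of_mem (hXt1.mem_nhds h1)
        (fun a ha => hφ1const a ha xt20 hxt20 xt2 h2)
    exact (hfst.congr_of_eventuallyEq heq).congr_of_eventuallyEq
      (Filter.EventuallyEq.refl _ _) |>.congr_of_eventuallyEq (Filter.EventuallyEq.refl _ _)
  have hφ11dapp : ∀ xt1 ∈ Xt1, ∀ xt2 ∈ Xt2, ∀ v : Fin n1 → ℝ,
      fderiv ℝ φ11 xt1 v = (fderiv ℝ φ (xt1, xt2) (v, 0)).1 := by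
    intro xt1 h1 xt2 h2 v
    rw [(hφ11deriv xt1 h1 xt2 h2).fderiv]
    rfl
  -- H-derivative kills second-block vectors
  have hHzero2 : ∀ x ∈ X1 ×ˢ X2, ∀ v : Fin n2 → ℝ,
      fderiv ℝ H x ((0 : Fin n1 → ℝ), v) = 0 := by
    intro x hx v
    have h := clm_expand2 (fderiv ℝ H x) 0 v
    have hj : ∀ j, fderiv ℝ H x ((0 : Fin n1 → ℝ), Pi.single j 1) = 0 :=
      fun j => congrFun (hHgrad2 x hx) j
    simpa [hj] using h
  -- first-block action of DH agrees with DH1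
  have hHfst : ∀ x1 ∈ X1, ∀ x2 ∈ X2, ∀ u : Fin n1 → ℝ,
      fderiv ℝ H (x1, x2) (u, (0 : Fin n2 → ℝ)) = fderiv ℝ H1 x1 u := by
    intro x1 hx1 x2 hx2 u
    have h := clm_expand2 (fderiv ℝ H (x1, x2)) u 0
    simp only [Pi.zero_apply, zero_smul, Finset.sum_const_zero, add_zero] at h
    rw [h, clm_expand (fderiv ℝ H1 x1) u]
    refine Finset.sum_congr rfl fun i _ => ?_
    have hg : fderiv ℝ H1 x1 (Pi.single i 1) = fderiv ℝ H (x1, x2) (Pi.single i 1, 0) :=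
      congrFun (hH1grad x1 hx1 x2 hx2) i
    rw [hg]
  -- main goals
  refine ⟨φ11, ψ11, hφ11cd, hφ11map, hψ11cd, hψ11map, hψφ11, hφψ11, ?_, ?_, ?_, ?_⟩
  · -- specification of φ11
    intro xt1 h1 xt2 h2
    refine ⟨hφ11val xt1 h1 xt2 h2, ?_⟩
    ext i j
    exact congrFun (hφ11dapp xt1 h1 xt2 h2 (Pi.single j 1)) i
  · -- grad2 (H ∘ φ) = 0
    intro xt hxt
    funext j
    have hc : fderiv ℝ (H ∘ φ) xt = (fderiv ℝ H (φ xt)).comp (fderiv ℝ φ xt) :=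
      fderiv_comp xt (hHd _ (hφmap hxt)) (hφd _ hxt)
    show fderiv ℝ (H ∘ φ) xt (0, Pi.single j 1) = 0
    rw [hc]
    simp only [ContinuousLinearMap.comp_apply]
    set w := fderiv ℝ φ xt (0, Pi.single j 1) with hw
    have hw1 : w = ((0 : Fin n1 → ℝ), w.2) := Prod.ext (hDφ12 xt hxt j) rfl
    rw [hw1]
    exact hHzero2 _ (hφmap hxt) w.2
  · -- specified function of H ∘ φ
    intro xt1 h1 xt2 h2
    have hp : (xt1, xt2) ∈ Xt1 ×ˢ Xt2 := ⟨h1, h2⟩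
    have hφp := hφmap hp
    constructor
    · show H1 (φ11 xt1) = H (φ (xt1, xt2))
      rw [hφ11val xt1 h1 xt2 h2]
      exact hH1val _ hφp.1 _ hφp.2
    · funext i
      have hdφ11 : DifferentiableAt ℝ φ11 xt1 :=
        (hφ11deriv xt1 h1 xt2 h2).differentiableAt
      have hc1 : fderiv ℝ (H1 ∘ φ11) xt1 = (fderiv ℝ H1 (φ11 xt1)).comp (fderiv ℝ φ11 xt1) :=
        fderiv_comp xt1 (hH1d _ (hφ11map h1)) hdφ11
      have hc2 : fderiv ℝ (H ∘ φ) (xt1, xt2)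
          = (fderiv ℝ H (φ (xt1, xt2))).comp (fderiv ℝ φ (xt1, xt2)) :=
        fderiv_comp _ (hHd _ hφp) (hφd _ hp)
      show fderiv ℝ (H1 ∘ φ11) xt1 (Pi.single i 1)
        = fderiv ℝ (H ∘ φ) (xt1, xt2) (Pi.single i 1, 0)
      rw [hc1, hc2]
      simp only [ContinuousLinearMap.comp_apply]
      set w := fderiv ℝ φ (xt1, xt2) (Pi.single i 1, 0) with hwdef
      have hsplit : w = ((w.1, 0) : (Fin n1 → ℝ) × (Fin n2 → ℝ)) + (0, w.2) := by simp
      rw [hsplit, map_add]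
      have hz : fderiv ℝ H (φ (xt1, xt2)) ((0 : Fin n1 → ℝ), w.2) = 0 :=
        hHzero2 _ hφp w.2
      have hf : fderiv ℝ H (φ (xt1, xt2)) (w.1, (0 : Fin n2 → ℝ))
          = fderiv ℝ H1 ((φ (xt1, xt2)).1) w.1 := hHfst _ hφp.1 _ hφp.2 w.1
      rw [hz, hf, add_zero]
      rw [hφ11dapp xt1 h1 xt2 h2 (Pi.single i 1), hφ11val xt1 h1 xt2 h2]
  · -- discrete gradient via chain rule
    intro Dφ11 hJ
    obtain ⟨hJc, hJp, hJd⟩ := hJ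
    obtain ⟨hGc, hGp, hGd⟩ := hDH1
    have hφ11c : ContinuousOn φ11 Xt1 := hφ11cd.continuousOn
    refine ⟨?_, ?_, ?_⟩
    · -- continuity
      have hA : ContinuousOn (fun p : (Fin n1 → ℝ) × (Fin n1 → ℝ) => (Dφ11 p.1 p.2)ᵀ)
          (Xt1 ×ˢ Xt1) :=
        (continuous_id.matrix_transpose : Continuous fun M : Matrix (Fin n1) (Fin n1) ℝ => Mᵀ).comp_continuousOn hJc
      have hpair : ContinuousOn (fun p : (Fin n1 → ℝ) × (Fin n1 → ℝ) =>
          ((φ11 p.1, φ11 p.2) : (Fin n1 → ℝ) × (Fin n1 → ℝ))) (Xt1 ×ˢ Xt1) :=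
        (hφ11c.comp continuous_fst.continuousOn (fun p hp => hp.1)).prodMk
          (hφ11c.comp continuous_snd.continuousOn (fun p hp => hp.2))
      have hB : ContinuousOn (fun p : (Fin n1 → ℝ) × (Fin n1 → ℝ) =>
          DH1 (φ11 p.1) (φ11 p.2)) (Xt1 ×ˢ Xt1) :=
        hGc.comp hpair (fun p hp => ⟨hφ11map hp.1, hφ11map hp.2⟩)
      have hmv : Continuous (fun q : (Matrix (Fin n1) (Fin n1) ℝ) × (Fin n1 → ℝ) =>
          q.1 *ᵥ q.2) := Continuous.matrix_mulVec continuous_fst continuous_snd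
      exact hmv.comp_continuousOn (hA.prodMk hB)
    · -- product rule
      intro a ha b hb
      show (Dφ11 a b)ᵀ *ᵥ DH1 (φ11 a) (φ11 b) ⬝ᵥ (b - a) = (H1 ∘ φ11) b - (H1 ∘ φ11) a
      rw [Matrix.mulVec_transpose, ← dotProduct_mulVec, hJp a ha b hb]
      exact hGp _ (hφ11map ha) _ (hφ11map hb)
    · -- diagonal
      intro a ha
      show (Dφ11 a a)ᵀ *ᵥ DH1 (φ11 a) (φ11 a) = grad (H1 ∘ φ11) a
      rw [hJd a ha, hGd _ (hφ11map ha)]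
      funext i
      have hdφ11 : DifferentiableAt ℝ φ11 a :=
        (hφ11deriv a ha xt20 hxt20).differentiableAt
      have hc1 : fderiv ℝ (H1 ∘ φ11) a = (fderiv ℝ H1 (φ11 a)).comp (fderiv ℝ φ11 a) :=
        fderiv_comp a (hH1d _ (hφ11map ha)) hdφ11
      have h2 : grad (H1 ∘ φ11) a i
          = ∑ k, (fderiv ℝ φ11 a (Pi.single i 1)) k * fderiv ℝ H1 (φ11 a) (Pi.single k 1) := by
        show fderiv ℝ (H1 ∘ φ11) a (Pi.single i 1) = _
        rw [hc1]
        simp only [ContinuousLinearMap.comp_apply]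
        rw [clm_expand (fderiv ℝ H1 (φ11 a)) (fderiv ℝ φ11 a (Pi.single i 1))]
        simp [smul_eq_mul]
      rw [h2]
      simp only [Matrix.mulVec, dotProduct, Matrix.transpose_apply, jac,
        Matrix.of_apply, grad]
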